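/- arXiv:1306.2930 — 6 statements merged into one kernel-verified Lean document; each statement's English description precedes it below -/
import Mathlib

section
/- For a connected finite graph G and a connected partition π of G, let F(π) be the set of edges of G whose endpoints lie in distinct blocks of π. Then for any two connected partitions π, π' of G, F of the common-connected-refinement of π and π' equals F(π) ∪ F(π'). -/
open SimpleGraph
open scoped Classical

variable {V : Type*} [Fintype V] [DecidableEq V]

/-- `π` is a connected partition of `G`: every block (equivalence class) of `π`
induces a connected subgraph. -/
def ConnPart (G : SimpleGraph V) (π : Setoid V) : Prop :=
  ∀ c ∈ π.classes, (G.induce c).Connected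

/-- `F(π)`: the set of edges of `G` whose endpoints lie in distinct blocks of `π`. -/
def crossF (G : SimpleGraph V) (π : Setoid V) : Set (Sym2 V) :=
  {e | e ∈ G.edgeSet ∧ ∃ u v, e = s(u, v) ∧ ¬ π.r u v}

/-- Auxiliary graph: edges of `G` lying inside a block of the common refinement of
`π` and `π'`. -/
def meetGraph (G : SimpleGraph V) (π π' : Setoid V) : SimpleGraph V where
  Adj u v := G.Adj u v ∧ π.r u v ∧ π'.r u v
  symm := ⟨fun u v h => ⟨h.1.symm, π.iseqv.symm h.2.1, π'.iseqv.symm h.2.2⟩⟩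
  loopless := ⟨fun u h => G.loopless.irrefl u h.1⟩

/-- The common-connected-refinement of `π` and `π'`: its blocks are the connected
components of the subgraphs induced on the blocks of the common refinement. -/
def connMeet (G : SimpleGraph V) (π π' : Setoid V) : Setoid V :=
  (meetGraph G π π').reachableSetoid


lemma meetGraph_reach_rel {V : Type*} (G : SimpleGraph V) (π π' : Setoid V) {u v : V}
    (h : (meetGraph G π π').Reachable u v) : π.r u v ∧ π'.r u v := by
  obtain ⟨w⟩ := h
  induction w with
  | nil => exact ⟨π.refl _, π'.refl _⟩
  | cons h _ ih => exact ⟨π.trans h.2.1 ih.1, π'.trans h.2.2 ih.2⟩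

/-- `F` of the common-connected-refinement of two connected partitions is the
union of the `F`'s. -/
theorem stmt_2 (G : SimpleGraph V) (hG : G.Connected) (π π' : Setoid V)
    (hπ : ConnPart G π) (hπ' : ConnPart G π') :
    crossF G (connMeet G π π') = crossF G π ∪ crossF G π' := by
  ext e
  constructor
  · rintro ⟨he, u, v, rfl, hrel⟩
    by_cases h1 : π.r u v
    · by_cases h2 : π'.r u v
      · exact absurd (SimpleGraph.Adj.reachable ⟨he, h1, h2⟩ : (meetGraph G π π').Reachable u v) hrel
      · exact Or.inr ⟨he, u, v, rfl, h2⟩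
    · exact Or.inl ⟨he, u, v, rfl, h1⟩
  · rintro (⟨he, u, v, rfl, hrel⟩ | ⟨he, u, v, rfl, hrel⟩)
    · exact ⟨he, u, v, rfl, fun h => hrel (meetGraph_reach_rel G π π' h).1⟩
    · exact ⟨he, u, v, rfl, fun h => hrel (meetGraph_reach_rel G π π' h).2⟩
end

section
/- A connected partition π of a connected graph G has exactly two blocks if and only if F(π) is a minimal nonempty element among the sets {F(σ) : σ a connected partition of G with more than one block}, ordered by inclusion. Equivalently, the atoms of the dual connected partition lattice are exactly the connected cuts of G. -/
open SimpleGraph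
open scoped Classical

variable {V : Type*} [Fintype V] [DecidableEq V]

private lemma rel_trans_walk {W : Type*} {G' : SimpleGraph W} {r : W → W → Prop}
    (hrefl : ∀ a, r a a) (hcons : ∀ ⦃a b c⦄, G'.Adj a b → r b c → r a c)
    {a b : W} (w : G'.Walk a b) : r a b := by
  induction w with
  | nil => exact hrefl _
  | cons h _ ih => exact hcons h ih

private lemma exists_cross_of_walk {G : SimpleGraph V} (π : Setoid V) {a b : V}
    (w : G.Walk a b) (hab : ¬ π.r a b) : (crossF G π).Nonempty := by
  induction w with
  | nil => exact absurd (π.refl' _) hab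
  | @cons u x v h p ih =>
    by_cases hux : π.r u x
    · exact ih (fun hxb => hab (π.trans' hux hxb))
    · exact ⟨s(u, x), G.mem_edgeSet.2 h, u, x, rfl, hux⟩

private lemma not_mem_crossF {G : SimpleGraph V} {π : Setoid V} {p q : V}
    (h : π.r p q) : s(p, q) ∉ crossF G π := by
  rintro ⟨-, u, v, huv, hne⟩
  rw [Sym2.eq_iff] at huv
  rcases huv with ⟨rfl, rfl⟩ | ⟨rfl, rfl⟩
  · exact hne h
  · exact hne (π.symm' h)

private lemma mem_crossF {G : SimpleGraph V} {π : Setoid V} {p q : V}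
    (hadj : G.Adj p q) (h : ¬ π.r p q) : s(p, q) ∈ crossF G π :=
  ⟨G.mem_edgeSet.2 hadj, p, q, rfl, h⟩

/-- If every cross edge of `σ` is a cross edge of `π`, and blocks of `π` are
connected, then `π` refines `σ`. -/
private lemma rel_mono {G : SimpleGraph V} {π σ : Setoid V} (hπ : ConnPart G π)
    (hsub : crossF G σ ⊆ crossF G π) {x y : V} (h : π.r x y) : σ.r x y := by
  have hconn := hπ _ (π.mem_classes y)
  obtain ⟨w⟩ := hconn ⟨x, h⟩ ⟨y, π.refl' y⟩
  refine rel_trans_walk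
    (r := fun a b : {z // z ∈ {z | π.r z y}} => σ.r a.val b.val)
    (fun a => σ.refl' _) ?_ w
  rintro a b c hab hbc
  have hadj : G.Adj a.val b.val := hab
  have hrel : π.r a.val b.val := π.trans' a.2 (π.symm' b.2)
  have hnot : s(a.val, b.val) ∉ crossF G σ := fun hm => not_mem_crossF hrel (hsub hm)
  by_cases hσ : σ.r a.val b.val
  · exact σ.trans' hσ hbc
  · exact absurd (mem_crossF hadj hσ) hnot

private lemma reachable_induce_of_walk {H : SimpleGraph V} {c : Set V} :
    ∀ {a b : V} (w : H.Walk a b) (hw : ∀ x ∈ w.support, x ∈ c),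
      (H.induce c).Reachable ⟨a, hw a w.start_mem_support⟩ ⟨b, hw b w.end_mem_support⟩ := by
  intro a b w
  induction w with
  | nil => intro hw; rfl
  | @cons u x v h p ih =>
    intro hw
    have hx : x ∈ c := hw x (by simp [SimpleGraph.Walk.support_cons])
    have hu : u ∈ c := hw u (by simp)
    have hstep : (H.induce c).Adj ⟨u, hu⟩ ⟨x, hx⟩ := h
    refine hstep.reachable.trans ?_
    have := ih (fun z hz => hw z (by simp [SimpleGraph.Walk.support_cons, hz]))
    convert this using 2

private lemma induce_reachClass_connected (H : SimpleGraph V) (y : V) :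
    (H.induce {x | H.Reachable x y}).Connected := by
  rw [SimpleGraph.connected_iff]
  constructor
  · rintro ⟨a, ha⟩ ⟨b, hb⟩
    obtain ⟨w⟩ := (ha : H.Reachable a y).trans (hb : H.Reachable b y).symm
    have hw : ∀ x ∈ w.support, x ∈ {x | H.Reachable x y} := by
      intro x hx
      exact ((w.takeUntil x hx).reachable.symm.trans ha : H.Reachable x y)
    have := reachable_induce_of_walk w hw
    convert this using 2
  · exact ⟨⟨y, SimpleGraph.Reachable.refl y⟩⟩

/-- A connected partition has exactly two blocks iff `F(π)` is a minimal nonempty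
element among the sets `F(σ)` for connected partitions `σ` with more than one
block (i.e. `σ ≠ ⊤`), ordered by inclusion. -/
theorem stmt_4 (G : SimpleGraph V) (hG : G.Connected) (π : Setoid V)
    (hπ : ConnPart G π) :
    π.classes.ncard = 2 ↔
      (crossF G π).Nonempty ∧
        ∀ σ : Setoid V, ConnPart G σ → σ ≠ ⊤ →
          crossF G σ ⊆ crossF G π → crossF G σ = crossF G π := by
  constructor
  · intro h2
    obtain ⟨A, B, hAB, hcls⟩ := Set.ncard_eq_two.mp h2
    have hA : A ∈ π.classes := by rw [hcls]; exact Set.mem_insert _ _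
    have hB : B ∈ π.classes := by rw [hcls]; exact Set.mem_insert_of_mem _ rfl
    obtain ⟨a, ha⟩ : A.Nonempty := Set.nonempty_iff_ne_empty.2
      (fun h => Setoid.empty_notMem_classes (h ▸ hA))
    obtain ⟨b, hb⟩ : B.Nonempty := Set.nonempty_iff_ne_empty.2
      (fun h => Setoid.empty_notMem_classes (h ▸ hB))
    have hab : ¬ π.r a b := by
      intro h
      obtain ⟨ya, hya⟩ := id hA
      have hbA : b ∈ A := by
        rw [hya] at ha ⊢
        exact π.trans' (π.symm' h) ha
      exact hAB (Setoid.eq_of_mem_classes hA hbA hB hb)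
    constructor
    · obtain ⟨w⟩ := hG a b
      exact exists_cross_of_walk π w hab
    · intro σ hσ hσtop hsub
      have hrel : ∀ x y, π.r x y ↔ σ.r x y := by
        intro x y
        refine ⟨rel_mono hπ hsub, fun hσxy => ?_⟩
        by_contra hπxy
        -- the classes of x and y are the two classes A and B
        apply hσtop
        have hCx : {z | π.r z x} ∈ π.classes := π.mem_classes x
        have hCy : {z | π.r z y} ∈ π.classes := π.mem_classes y
        have hCxy : {z | π.r z x} ≠ {z | π.r z y} := by
          intro h
          have : x ∈ {z | π.r z y} := h ▸ (π.refl' x : x ∈ {z | π.r z x})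
          exact hπxy this
        have mem2 : ∀ w : V, {z | π.r z w} = A ∨ {z | π.r z w} = B := by
          intro w
          have hm := π.mem_classes w
          rw [hcls] at hm
          rcases Set.mem_insert_iff.1 hm with h | h
          · exact Or.inl h
          · exact Or.inr (Set.mem_singleton_iff.1 h)
        have cover : ∀ v : V, π.r v x ∨ π.r v y := by
          intro v
          have hv : v ∈ {z | π.r z v} := π.refl' v
          rcases mem2 x with hx1 | hx1 <;> rcases mem2 y with hy1 | hy1 <;>
            rcases mem2 v with hv1 | hv1 <;>
            first
              | exact absurd (hx1.trans hy1.symm) hCxy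
              | exact Or.inl (show v ∈ {z | π.r z x} by rw [hx1, ← hv1]; exact hv)
              | exact Or.inr (show v ∈ {z | π.r z y} by rw [hy1, ← hv1]; exact hv)
        have coverσ : ∀ v : V, σ.r v x ∨ σ.r v y := by
          intro v
          rcases cover v with h | h
          · exact Or.inl (rel_mono hπ hsub h)
          · exact Or.inr (rel_mono hπ hsub h)
        refine Setoid.ext fun p q => ?_
        have htop : (⊤ : Setoid V).r p q := trivial
        refine ⟨fun _ => htop, fun _ => ?_⟩
        have hp := coverσ p
        have hq := coverσ q
        rcases hp with hp | hp <;> rcases hq with hq | hq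
        · exact σ.trans' hp (σ.symm' hq)
        · exact σ.trans' (σ.trans' hp hσxy) (σ.symm' hq)
        · exact σ.trans' (σ.trans' hp (σ.symm' hσxy)) (σ.symm' hq)
        · exact σ.trans' hp (σ.symm' hq)
      have : σ = π := Setoid.ext fun x y => (hrel x y).symm
      rw [this]
  · rintro ⟨⟨e, he, u, v, rfl, huv⟩, hmin⟩
    have hadj : G.Adj u v := G.mem_edgeSet.1 he
    by_contra hne
    -- there are at least three classes; find a class A avoiding u and v
    have hCu : {z | π.r z u} ∈ π.classes := π.mem_classes u
    have hCv : {z | π.r z v} ∈ π.classes := π.mem_classes v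
    have hCuv : {z | π.r z u} ≠ {z | π.r z v} := by
      intro h
      have : u ∈ {z | π.r z v} := by rw [← h]; exact π.refl' u
      exact huv this
    obtain ⟨A, hA, hAu, hAv⟩ :
        ∃ A ∈ π.classes, A ≠ {z | π.r z u} ∧ A ≠ {z | π.r z v} := by
      by_contra hno
      push_neg at hno
      have hsub2 : π.classes ⊆ {{z | π.r z u}, {z | π.r z v}} := by
        intro C hC
        rcases Classical.em (C = {z | π.r z u}) with h | h
        · exact Or.inl h
        · exact Or.inr (hno C hC h)
      have h1 : π.classes.ncard ≤ 2 := by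
        calc π.classes.ncard ≤ ({{z | π.r z u}, {z | π.r z v}} : Set (Set V)).ncard :=
              Set.ncard_le_ncard hsub2 (Set.toFinite _)
          _ = 2 := Set.ncard_pair hCuv
      have h2 : 2 ≤ π.classes.ncard := by
        calc 2 = ({{z | π.r z u}, {z | π.r z v}} : Set (Set V)).ncard :=
              (Set.ncard_pair hCuv).symm
          _ ≤ π.classes.ncard := Set.ncard_le_ncard (by
              rintro C (rfl | rfl)
              · exact hCu
              · exact hCv) (Set.toFinite _)
      exact hne (le_antisymm h1 h2)
    have huA : u ∉ A := by
      intro h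
      exact hAu (Setoid.eq_of_mem_classes hA h hCu (π.refl' u))
    have hvA : v ∉ A := by
      intro h
      exact hAv (Setoid.eq_of_mem_classes hA h hCv (π.refl' v))
    -- build the cut σ separating A from its complement
    set H : SimpleGraph V :=
      { Adj := fun p q => G.Adj p q ∧ (p ∈ A ↔ q ∈ A)
        symm := ⟨fun p q h => ⟨h.1.symm, h.2.symm⟩⟩
        loopless := ⟨fun p h => G.loopless.irrefl p h.1⟩ } with hH
    set σ : Setoid V := H.reachableSetoid with hσdef
    have hσrel : ∀ p q, σ.r p q ↔ H.Reachable p q := fun p q => Iff.rfl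
    -- properties of H-walks: they preserve membership in A
    have hpres : ∀ {p q : V}, H.Reachable p q → (p ∈ A ↔ q ∈ A) := by
      intro p q h
      obtain ⟨w⟩ := h
      exact rel_trans_walk (G' := H) (r := fun p q => (p ∈ A ↔ q ∈ A)) (fun _ => Iff.rfl)
        (fun a b c hab hbc => hab.2.trans hbc) w
    have hσconn : ConnPart G σ := by
      intro c hc
      obtain ⟨y, hy⟩ := hc
      have hcy : c = {x | H.Reachable x y} := hy
      rw [hcy]
      have hHle : H.induce {x | H.Reachable x y} ≤ G.induce {x | H.Reachable x y} := by
        intro p q h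
        exact h.1
      exact (induce_reachClass_connected H y).mono hHle
    have hσtop : σ ≠ ⊤ := by
      intro h
      obtain ⟨yA, hyA⟩ := hA
      have haA : yA ∈ A := by rw [hyA]; exact π.refl' yA
      have : σ.r yA u := h ▸ trivial
      exact huA ((hpres ((hσrel _ _).1 this)).1 haA)
    have hsub : crossF G σ ⊆ crossF G π := by
      rintro e ⟨he', p, q, rfl, hpq⟩
      have hadj' : G.Adj p q := G.mem_edgeSet.1 he'
      have hnA : ¬ (p ∈ A ↔ q ∈ A) := by
        intro h
        exact hpq ((hσrel p q).2 (SimpleGraph.Adj.reachable ⟨hadj', h⟩))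
      refine mem_crossF hadj' ?_
      intro hrel
      apply hnA
      obtain ⟨yA, hyA⟩ := hA
      rw [hyA]
      exact ⟨fun h => π.trans' (π.symm' hrel) h, fun h => π.trans' hrel h⟩
    have heq := hmin σ hσconn hσtop hsub
    have hmem : s(u, v) ∈ crossF G σ := heq ▸ mem_crossF hadj huv
    have hσuv : σ.r u v := (hσrel u v).2
      (SimpleGraph.Adj.reachable ⟨hadj, iff_of_false huA hvA⟩)
    exact not_mem_crossF hσuv hmem
end

section
/- Every connected partition of a connected graph G with more than one block is the meet (in the refinement order) of connected cuts; equivalently, the dual connected partition lattice L*_G is an atomic lattice. -/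
open SimpleGraph
open scoped Classical

variable {V : Type*} [Fintype V] [DecidableEq V]

section Restrict

variable {W : Type*}

/-- The spanning subgraph of `G` with only the edges inside `s`. -/
private def restrict (G : SimpleGraph W) (s : Set W) : SimpleGraph W where
  Adj x y := G.Adj x y ∧ x ∈ s ∧ y ∈ s
  symm := ⟨fun _ _ h => ⟨h.1.symm, h.2.2, h.2.1⟩⟩
  loopless := ⟨fun x h => G.loopless.irrefl x h.1⟩

private lemma restrict_mono (G : SimpleGraph W) {s t : Set W} (h : s ⊆ t) :
    restrict G s ≤ restrict G t := fun _ _ ha => ⟨ha.1, h ha.2.1, h ha.2.2⟩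

private lemma walk_mem_of_restrict (G : SimpleGraph W) {s : Set W} :
    ∀ {x y : W}, (restrict G s).Walk x y → x ∈ s → y ∈ s
  | _, _, .nil, hx => hx
  | _, _, .cons h p, _ => walk_mem_of_restrict G p h.2.2

private lemma reachable_induce_of_restrict (G : SimpleGraph W) {s : Set W} :
    ∀ {x y : W} (hx : x ∈ s) (hy : y ∈ s), (restrict G s).Walk x y →
      (G.induce s).Reachable ⟨x, hx⟩ ⟨y, hy⟩
  | _, _, _, _, .nil => Reachable.refl _
  | _, _, hx, hy, .cons h p =>
      Reachable.trans (Adj.reachable (by exact h.1 :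
        (G.induce s).Adj ⟨_, hx⟩ ⟨_, h.2.2⟩)) (reachable_induce_of_restrict G h.2.2 hy p)

private lemma restrict_reachable_of_induce (G : SimpleGraph W) {s : Set W} {x y : s}
    (h : (G.induce s).Reachable x y) : (restrict G s).Reachable x.1 y.1 :=
  h.map ((⟨Subtype.val, fun {a b} hab => ⟨hab, a.2, b.2⟩⟩ : G.induce s →g restrict G s))

private lemma restrict_class_reachable (G : SimpleGraph W) {s : Set W} {x y : W}
    (h : (restrict G s).Reachable x y) :
    (restrict G {z | (restrict G s).Reachable x z}).Reachable x y := by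
  obtain ⟨w⟩ := h
  induction w with
  | nil => exact Reachable.refl _
  | @cons a b c h p ih =>
    have hab : (restrict G s).Reachable a b := Adj.reachable h
    have hset : {z | (restrict G s).Reachable b z} = {z | (restrict G s).Reachable a z} := by
      ext z
      exact ⟨fun hz => hab.trans hz, fun hz => hab.symm.trans hz⟩
    rw [hset] at ih
    exact Reachable.trans (Adj.reachable ⟨h.1, Reachable.refl a, hab⟩) ih

private lemma induce_connected_of_restrict (G : SimpleGraph W) {s : Set W} (hne : s.Nonempty)
    (h : ∀ x ∈ s, ∀ y ∈ s, (restrict G s).Reachable x y) : (G.induce s).Connected := by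
  have hn : Nonempty s := ⟨⟨hne.choose, hne.choose_spec⟩⟩
  refine Connected.mk fun a b => ?_
  obtain ⟨w⟩ := h a.1 a.2 b.1 b.2
  exact reachable_induce_of_restrict G a.2 b.2 w

end Restrict

/-- For any two vertices in distinct blocks of a connected partition there is a
saturated connected set, with connected complement, separating them. -/
private lemma exists_sep (G : SimpleGraph V) (hG : G.Connected) (π : Setoid V)
    (hπ : ConnPart G π) {u v : V} (huv : ¬ π u v) :
    ∃ A : Set V, u ∈ A ∧ v ∉ A ∧ (∀ x ∈ A, ∀ y, π x y → y ∈ A) ∧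
      (G.induce A).Connected ∧ (G.induce Aᶜ).Connected := by
  set P : Set (Set V) :=
    {A | u ∈ A ∧ v ∉ A ∧ (∀ x ∈ A, ∀ y, π x y → y ∈ A) ∧ (G.induce A).Connected} with hPdef
  have hP0 : {x | π x u} ∈ P := by
    refine ⟨π.refl' u, fun h => huv (π.symm' h), ?_, hπ _ ⟨u, rfl⟩⟩
    intro x hx y hxy
    exact π.trans' (π.symm' hxy) hx
  obtain ⟨A, hA, hmax⟩ :=
    Set.Finite.exists_maximalFor Set.ncard P (Set.toFinite P) ⟨_, hP0⟩
  obtain ⟨huA, hvA, hsat, hconnA⟩ := hA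
  refine ⟨A, huA, hvA, hsat, hconnA, ?_⟩
  have hcompl : ∀ x ∈ (Aᶜ : Set V), (restrict G Aᶜ).Reachable x v := by
    intro x0 hx0
    by_contra hre
    set C : Set V := {z | (restrict G Aᶜ).Reachable x0 z} with hC
    have hx0C : x0 ∈ C := Reachable.refl _
    have hCsub : C ⊆ Aᶜ := by
      intro y hy
      obtain ⟨w⟩ := (hy : (restrict G Aᶜ).Reachable x0 y)
      exact walk_mem_of_restrict G w hx0
    have hCconn : (G.induce C).Connected := by
      refine induce_connected_of_restrict G ⟨x0, hx0C⟩ ?_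
      intro a ha b hb
      exact (restrict_class_reachable G ha).symm.trans (restrict_class_reachable G hb)
    have hCsat : ∀ x ∈ C, ∀ y, π x y → y ∈ C := by
      intro x hx y hxy
      have hcls : (G.induce {z | π z x}).Connected := hπ _ ⟨x, rfl⟩
      have hxcl : x ∈ {z | π z x} := π.refl' x
      have hycl : y ∈ {z | π z x} := π.symm' hxy
      have h1 : (G.induce {z | π z x}).Reachable ⟨x, hxcl⟩ ⟨y, hycl⟩ :=
        hcls.preconnected _ _
      have h2 : (restrict G {z | π z x}).Reachable x y := restrict_reachable_of_induce G h1
      have hsub : {z | π z x} ⊆ Aᶜ := by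
        intro w hw hwA
        exact (hCsub hx) (hsat w hwA x hw)
      exact Reachable.trans hx (Reachable.mono (restrict_mono G hsub) h2)
    obtain ⟨w⟩ := hG.preconnected x0 v
    obtain ⟨d, _, hdf, hds⟩ := w.exists_boundary_dart C hx0C hre
    have hadj : G.Adj d.fst d.snd := d.adj
    have hbA : d.snd ∈ A := by
      by_contra hbA
      exact hds (Reachable.trans hdf (Adj.reachable ⟨hadj, hCsub hdf, hbA⟩))
    have hA' : (A ∪ C) ∈ P := by
      refine ⟨Or.inl huA, ?_, ?_, ?_⟩
      · rintro (h | h)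
        · exact hvA h
        · exact hre h
      · rintro x (hx | hx) y hxy
        · exact Or.inl (hsat x hx y hxy)
        · exact Or.inr (hCsat x hx y hxy)
      · exact connected_induce_union hconnA.preconnected hCconn.preconnected hbA hdf hadj.symm
    have heq : (A ∪ C).ncard ≤ A.ncard :=
      hmax hA' (Set.ncard_le_ncard Set.subset_union_left (Set.toFinite _))
    have hAeq : A = A ∪ C :=
      Set.eq_of_subset_of_ncard_le Set.subset_union_left heq (Set.toFinite _)
    exact (hCsub hdf) (hAeq ▸ (Or.inr hdf : d.fst ∈ A ∪ C))
  refine induce_connected_of_restrict G ⟨v, hvA⟩ ?_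
  intro a ha b hb
  exact (hcompl a ha).trans (hcompl b hb).symm

/-- Every connected partition with more than one block is the greatest lower bound,
in the refinement order restricted to connected partitions, of a set of connected
cuts (connected partitions with exactly two blocks). -/
theorem stmt_5 (G : SimpleGraph V) (hG : G.Connected) (π : Setoid V)
    (hπ : ConnPart G π) (hne : π ≠ ⊤) :
    ∃ S : Set (Setoid V),
      (∀ σ ∈ S, ConnPart G σ ∧ σ.classes.ncard = 2) ∧
      (∀ σ ∈ S, π ≤ σ) ∧
      ∀ τ : Setoid V, ConnPart G τ → (∀ σ ∈ S, τ ≤ σ) → τ ≤ π := by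
  refine ⟨{σ | (ConnPart G σ ∧ σ.classes.ncard = 2) ∧ π ≤ σ},
    fun σ h => h.1, fun σ h => h.2, ?_⟩
  intro τ _ hall
  rw [Setoid.le_def]
  intro a b hab
  by_contra hpab
  obtain ⟨A, haA, hbA, hsat, hcA, hcAc⟩ := exists_sep G hG π hπ hpab
  set σ : Setoid V := ⟨fun p q => (p ∈ A ↔ q ∈ A),
    ⟨fun _ => Iff.rfl, fun h => h.symm, fun h1 h2 => h1.trans h2⟩⟩ with hσ
  have hclasses : σ.classes = {A, Aᶜ} := by
    ext c
    constructor
    · rintro ⟨w, rfl⟩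
      by_cases hw : w ∈ A
      · left
        ext z
        simp only [Set.mem_setOf_eq]
        exact ⟨fun h => h.mpr hw, fun h => ⟨fun _ => hw, fun _ => h⟩⟩
      · right
        ext z
        simp only [Set.mem_setOf_eq, Set.mem_compl_iff]
        exact ⟨fun h hz => hw (h.mp hz), fun h => ⟨fun hz => absurd hz h, fun hw' => absurd hw' hw⟩⟩
    · rintro (rfl | rfl)
      · refine ⟨a, ?_⟩
        ext z
        simp only [Set.mem_setOf_eq]
        exact ⟨fun h => ⟨fun _ => haA, fun _ => h⟩, fun h => h.mpr haA⟩
      · refine ⟨b, ?_⟩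
        ext z
        simp only [Set.mem_compl_iff, Set.mem_setOf_eq]
        exact ⟨fun h => ⟨fun hz => absurd hz h, fun hb' => absurd hb' hbA⟩,
          fun h hz => hbA (h.mp hz)⟩
  have hσmem : σ ∈ {σ | (ConnPart G σ ∧ σ.classes.ncard = 2) ∧ π ≤ σ} := by
    refine ⟨⟨?_, ?_⟩, ?_⟩
    · intro c hc
      rw [hclasses] at hc
      rcases hc with rfl | rfl
      · exact hcA
      · exact hcAc
    · rw [hclasses]
      refine Set.ncard_pair ?_
      intro h
      exact (h ▸ haA : a ∈ (Aᶜ : Set V)) haA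
    · rw [Setoid.le_def]
      intro p q hpq
      exact ⟨fun hp => hsat p hp q hpq, fun hq => hsat q hq p (π.symm' hpq)⟩
  have := Setoid.le_def.mp (hall σ hσmem) hab
  exact hbA (this.mp haA)
end

section
/- The lcm-lattice of the connected cut-set ideal J of a connected graph G is isomorphic to the order dual of the connected partition lattice of G, via the map sending a connected partition π to the squarefree monomial y^{F(π)} supported on the edges joining distinct blocks of π. -/
open SimpleGraph
open scoped Classical

variable {V : Type*} [Fintype V] [DecidableEq V]

/-- `F(σ)` for `σ` a connected cut: a connected cut-set. -/
def IsCCS (G : SimpleGraph V) (c : Set (Sym2 V)) : Prop :=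
  ∃ σ : Setoid V, ConnPart G σ ∧ σ.classes.ncard = 2 ∧ c = crossF G σ

/-- The lcm-lattice of the connected cut-set ideal, realized (via supports of
squarefree monomials) as the set of all unions of families of connected cut-sets,
ordered by inclusion. -/
def lcmLat (G : SimpleGraph V) : Set (Set (Sym2 V)) :=
  {S | ∃ 𝒞 : Set (Set (Sym2 V)), (∀ c ∈ 𝒞, IsCCS G c) ∧ S = ⋃₀ 𝒞}

set_option linter.unusedSectionVars false
set_option linter.deprecated false
set_option maxHeartbeats 1000000

lemma rel_of_reachable {W : Type*} {H : SimpleGraph W} {f : W → V} {s : Setoid V}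
    (h : ∀ a b, H.Adj a b → s.r (f a) (f b)) {a b : W} (hr : H.Reachable a b) :
    s.r (f a) (f b) := by
  obtain ⟨p⟩ := hr
  induction p with
  | nil => exact s.refl _
  | cons ha _ ih => exact s.trans (h _ _ ha) ih

lemma reachSet_induce_connected {H G : SimpleGraph V} (hle : H ≤ G) (v : V) :
    (G.induce {x | H.Reachable x v}).Connected := by
  have key : ∀ (a b : V) (p : H.Walk a b) (hb : H.Reachable b v),
      (G.induce {x | H.Reachable x v}).Reachable ⟨a, Reachable.trans ⟨p⟩ hb⟩ ⟨b, hb⟩ := by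
    intro a b p
    induction p with
    | nil => intro hb; rfl
    | @cons x y z ha p ih =>
      intro hb
      have hy : H.Reachable y v := Reachable.trans ⟨p⟩ hb
      have hadj : (G.induce {x | H.Reachable x v}).Adj
          ⟨x, Reachable.trans ⟨Walk.cons ha p⟩ hb⟩ ⟨y, hy⟩ := by
        simpa using hle ha
      exact hadj.reachable.trans (ih hb)
  have : Nonempty {x | H.Reachable x v} := ⟨⟨v, Reachable.refl v⟩⟩
  constructor
  rintro ⟨a, ha⟩ ⟨b, hb⟩
  obtain ⟨p⟩ := ha
  obtain ⟨q⟩ := hb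
  exact (key a v p (Reachable.refl v)).trans (key b v q (Reachable.refl v)).symm

lemma crossF_mem {G : SimpleGraph V} {π : Setoid V} {x y : V} (hxy : G.Adj x y) :
    s(x, y) ∈ crossF G π ↔ ¬ π.r x y := by
  constructor
  · rintro ⟨-, u, v, he, hr⟩ hrel
    rw [Sym2.eq_iff] at he
    rcases he with ⟨rfl, rfl⟩ | ⟨rfl, rfl⟩
    · exact hr hrel
    · exact hr (π.symm hrel)
  · intro h
    exact ⟨G.mem_edgeSet.mpr hxy, x, y, rfl, h⟩

/-- Key construction: a connected cut separating the endpoints of a crossing edge,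
whose cut-set is contained in `crossF G π`. -/
lemma exists_cut {G : SimpleGraph V} (hG : G.Connected) {π : Setoid V}
    (hπ : ConnPart G π) {u v : V} (huv : G.Adj u v) (hne : ¬ π.r u v) :
    ∃ σ : Setoid V, ConnPart G σ ∧ σ.classes.ncard = 2 ∧
      crossF G σ ⊆ crossF G π ∧ s(u, v) ∈ crossF G σ := by
  -- the graph H : G-edges avoiding the block of u
  set H : SimpleGraph V :=
    { Adj := fun x y => G.Adj x y ∧ ¬ π.r x u ∧ ¬ π.r y u
      symm := ⟨fun x y h => ⟨h.1.symm, h.2.2, h.2.1⟩⟩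
      loopless := ⟨fun x h => G.loopless.irrefl x h.1⟩ } with hH
  have hHle : H ≤ G := fun _ _ h => h.1
  set C : Set V := {x | H.Reachable x v} with hC
  have hvu : ¬ π.r v u := fun h => hne (π.symm h)
  -- every element of C is not related to u
  have hCu : ∀ x ∈ C, ¬ π.r x u := by
    rintro x ⟨p⟩
    cases p with
    | nil => exact hvu
    | cons ha _ => exact ha.2.1
  have hvC : v ∈ C := Reachable.refl v
  have huC : u ∉ C := fun h => hCu u h (π.refl u)
  -- the graph H₂ : G-edges avoiding C
  set H₂ : SimpleGraph V :=
    { Adj := fun x y => G.Adj x y ∧ x ∉ C ∧ y ∉ C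
      symm := ⟨fun x y h => ⟨h.1.symm, h.2.2, h.2.1⟩⟩
      loopless := ⟨fun x h => G.loopless.irrefl x h.1⟩ } with hH2
  have hH2le : H₂ ≤ G := fun _ _ h => h.1
  -- points related to u reach u in H₂
  have claimA : ∀ x, π.r x u → H₂.Reachable x u := by
    intro x hx
    have hcls : {y | π.r y u} ∈ π.classes := π.mem_classes u
    have hconn := hπ _ hcls
    have hr : (G.induce {y | π.r y u}).Reachable ⟨x, hx⟩ ⟨u, π.refl u⟩ :=
      hconn.preconnected _ _
    have hom : ∀ (a b : {y | π.r y u}),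
        (G.induce {y | π.r y u}).Adj a b → H₂.Adj a.1 b.1 := by
      rintro ⟨a, ha⟩ ⟨b, hb⟩ hab
      exact ⟨hab, fun h => hCu a h ha, fun h => hCu b h hb⟩
    exact Reachable.map ⟨Subtype.val, fun h => hom _ _ h⟩ hr
  -- everything outside C reaches u in H₂
  have claimB : ∀ x ∉ C, H₂.Reachable x u := by
    have : ∀ (x b : V) (p : G.Walk x b), π.r b u → x ∉ C → H₂.Reachable x u := by
      intro x b p
      induction p with
      | nil => intro hb _; exact claimA _ hb
      | @cons x y z ha p ih =>
        intro hb hx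
        by_cases hxu : π.r x u
        · exact claimA x hxu
        · by_cases hyu : π.r y u
          · have hyC : y ∉ C := fun h => hCu y h hyu
            exact (Adj.reachable (G := H₂) ⟨ha, hx, hyC⟩).trans (claimA y hyu)
          · have hyC : y ∉ C := fun h =>
              hx ((Adj.reachable (G := H) ⟨ha, hxu, hyu⟩).trans h)
            exact (Adj.reachable (G := H₂) ⟨ha, hx, hyC⟩).trans (ih hb hyC)
    intro x hx
    exact this x u (hG.preconnected x u).some (π.refl u) hx
  have hCcompl : Cᶜ = {x | H₂.Reachable x u} := by
    ext x
    constructor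
    · exact fun hx => claimB x hx
    · rintro ⟨p⟩
      cases p with
      | nil => exact huC
      | cons ha _ => exact ha.2.1
  -- the two-block setoid
  set σ : Setoid V := ⟨fun x y => (x ∈ C ↔ y ∈ C),
    ⟨fun x => Iff.rfl, Iff.symm, Iff.trans⟩⟩ with hσ
  have hclasses : σ.classes = {C, Cᶜ} := by
    ext s
    constructor
    · rintro ⟨y, rfl⟩
      by_cases hy : y ∈ C
      · left; ext x; show (x ∈ C ↔ y ∈ C) ↔ _; simp [hy]
      · right; ext x; show (x ∈ C ↔ y ∈ C) ↔ _; simp [hy]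
    · rintro (rfl | rfl)
      · exact ⟨v, Set.ext fun x =>
          ⟨fun h => iff_of_true h hvC, fun h => h.mpr hvC⟩⟩
      · exact ⟨u, Set.ext fun x =>
          ⟨fun h => iff_of_false h huC, fun h hx => huC (h.mp hx)⟩⟩
  have hCne : C ≠ Cᶜ := fun h => (h ▸ hvC : v ∈ Cᶜ) hvC
  refine ⟨σ, ?_, ?_, ?_, ?_⟩
  · -- connected partition
    intro c hc
    rw [hclasses] at hc
    rcases hc with rfl | rfl
    · exact reachSet_induce_connected hHle v
    · rw [hCcompl]; exact reachSet_induce_connected hH2le u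
  · rw [hclasses]; exact Set.ncard_pair hCne
  · -- crossF σ ⊆ crossF π
    rintro e ⟨he, x, y, rfl, hr⟩
    have hxy : G.Adj x y := G.mem_edgeSet.mp he
    refine ⟨he, x, y, rfl, ?_⟩
    have main : ∀ a b : V, G.Adj a b → a ∈ C → b ∉ C → ¬ π.r a b := by
      intro a b hab haC hbC hrel
      have hau : ¬ π.r a u := hCu a haC
      have hbu : ¬ π.r b u := fun h => hau (π.trans hrel h)
      exact hbC ((Adj.reachable (G := H) ⟨hab.symm, hbu, hau⟩).trans haC)
    intro hrel
    by_cases hx : x ∈ C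
    · have hy : y ∉ C := fun h => hr ⟨fun _ => h, fun _ => hx⟩
      exact main x y hxy hx hy hrel
    · have hy : y ∈ C := by
        by_contra hy
        exact hr ⟨fun h => absurd h hx, fun h => absurd h hy⟩
      exact main y x hxy.symm hy hx (π.symm hrel)
  · exact ⟨G.mem_edgeSet.mpr huv, u, v, rfl, fun h => huC (h.mpr hvC)⟩

/-- The map `π ↦ F(π)` is an order isomorphism from the dual connected partition
lattice (connected partitions ordered by reverse refinement) onto the lcm-lattice
of the connected cut-set ideal (ordered by divisibility, i.e. inclusion of
supports): it lands in the lcm-lattice, is surjective onto it, and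
`π' ≤ π` in refinement order iff `F(π) ⊆ F(π')`. -/
theorem stmt_10 (G : SimpleGraph V) (hG : G.Connected) :
    (∀ π : Setoid V, ConnPart G π → crossF G π ∈ lcmLat G) ∧
    (∀ S ∈ lcmLat G, ∃ π : Setoid V, ConnPart G π ∧ crossF G π = S) ∧
    (∀ π π' : Setoid V, ConnPart G π → ConnPart G π' →
      (π' ≤ π ↔ crossF G π ⊆ crossF G π')) := by
  refine ⟨?_, ?_, ?_⟩
  · -- Part 1
    intro π hπ
    refine ⟨{c | IsCCS G c ∧ c ⊆ crossF G π}, fun c hc => hc.1, ?_⟩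
    apply Set.Subset.antisymm
    · rintro e ⟨he, x, y, rfl, hr⟩
      have hxy := G.mem_edgeSet.mp he
      obtain ⟨σ, h1, h2, h3, h4⟩ := exists_cut hG hπ hxy hr
      exact Set.mem_sUnion.mpr ⟨crossF G σ, ⟨⟨σ, h1, h2, rfl⟩, h3⟩, h4⟩
    · rintro e ⟨c, ⟨_, hsub⟩, hec⟩
      exact hsub hec
  · -- Part 2
    rintro S ⟨𝒞, h𝒞, rfl⟩
    set H₃ : SimpleGraph V :=
      { Adj := fun x y => G.Adj x y ∧ s(x, y) ∉ ⋃₀ 𝒞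
        symm := ⟨fun x y h => ⟨h.1.symm, by rw [Sym2.eq_swap]; exact h.2⟩⟩
        loopless := ⟨fun x h => G.loopless.irrefl x h.1⟩ } with hH3
    have hH3le : H₃ ≤ G := fun _ _ h => h.1
    refine ⟨H₃.reachableSetoid, ?_, ?_⟩
    · rintro c ⟨y, rfl⟩
      exact reachSet_induce_connected hH3le y
    · ext e
      constructor
      · rintro ⟨he, x, y, rfl, hr⟩
        have hxy := G.mem_edgeSet.mp he
        by_contra hS
        exact hr (Adj.reachable (G := H₃) ⟨hxy, hS⟩)
      · rintro ⟨c, hc𝒞, hec⟩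
        obtain ⟨τ, hτc, -, rfl⟩ := h𝒞 c hc𝒞
        obtain ⟨he, x, y, rfl, hnr⟩ := hec
        refine ⟨he, x, y, rfl, ?_⟩
        intro hrel
        refine hnr (rel_of_reachable (f := id) (fun a b hab => ?_) hrel)
        by_contra hab'
        exact hab.2 ⟨crossF G τ, hc𝒞, (crossF_mem hab.1).mpr hab'⟩
  · -- Part 3
    intro π π' hπ hπ'
    constructor
    · rintro hle e ⟨heE, x, y, rfl, hr⟩
      exact ⟨heE, x, y, rfl, fun h => hr (hle h)⟩
    · intro hsub
      rw [Setoid.le_def]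
      intro x y hxy
      have hconn := hπ' _ (π'.mem_classes y)
      have hr : (G.induce {z | π'.r z y}).Reachable ⟨x, hxy⟩ ⟨y, π'.refl y⟩ :=
        hconn.preconnected _ _
      refine rel_of_reachable (f := Subtype.val) (fun a b hab => ?_) hr
      have hGab : G.Adj a.1 b.1 := hab
      have hrel' : π'.r a.1 b.1 := π'.trans a.2 (π'.symm b.2)
      by_contra h
      exact (crossF_mem hGab).mp (hsub ((crossF_mem hGab).mpr h)) hrel'
end

section
/- In the lcm-lattice L_J of the connected cut-set ideal J, the join of two monomials y^{F(π)} and y^{F(π')} corresponding to connected partitions π and π' is y^{F(π) ∪ F(π')}, and F(π)∪F(π') = F(π ∨ π') where π ∨ π' is the join in the dual connected partition lattice. -/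
open SimpleGraph
open scoped Classical

variable {V : Type*} [Fintype V] [DecidableEq V]

/-- The squarefree monomial `y^S` in `k[y_e : e an edge]`. -/
noncomputable def yMon (k : Type*) [Field k] (S : Set (Sym2 V)) :
    MvPolynomial (Sym2 V) k :=
  MvPolynomial.monomial
    (Finsupp.equivFunOnFinite.symm fun e => if e ∈ S then 1 else 0) 1

lemma monomial_one_dvd_iff {σ k : Type*} [Field k] (a : σ →₀ ℕ) (m : MvPolynomial σ k) :
    MvPolynomial.monomial a 1 ∣ m ↔ ∀ d ∈ m.support, a ≤ d := by
  constructor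
  · rintro ⟨q, rfl⟩ d hd
    rw [MvPolynomial.mem_support_iff, MvPolynomial.coeff_monomial_mul'] at hd
    by_contra h
    simp [h] at hd
  · intro h
    refine ⟨∑ d ∈ m.support, MvPolynomial.monomial (d - a) (m.coeff d), ?_⟩
    rw [Finset.mul_sum]
    conv_lhs => rw [m.as_sum]
    refine Finset.sum_congr rfl fun d hd => ?_
    rw [MvPolynomial.monomial_mul, one_mul, add_tsub_cancel_of_le (h d hd)]

lemma reach_meet {G : SimpleGraph V} {π π' : Setoid V} {u v : V}
    (h : (meetGraph G π π').Reachable u v) : π.r u v ∧ π'.r u v := by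
  obtain ⟨w⟩ := h
  induction w with
  | nil => exact ⟨π.iseqv.refl _, π'.iseqv.refl _⟩
  | cons h p ih => exact ⟨π.iseqv.trans h.2.1 ih.1, π'.iseqv.trans h.2.2 ih.2⟩

lemma crossF_union_eq (G : SimpleGraph V) (π π' : Setoid V) :
    crossF G π ∪ crossF G π' = crossF G (connMeet G π π') := by
  ext e
  constructor
  · rintro (⟨he, u, v, rfl, hnr⟩ | ⟨he, u, v, rfl, hnr⟩) <;>
    · refine ⟨he, u, v, rfl, fun hr => hnr ?_⟩
      have hr' : (meetGraph G π π').Reachable u v := hr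
      first
        | exact (reach_meet hr').1
        | exact (reach_meet hr').2
  · rintro ⟨he, u, v, rfl, hnr⟩
    have hadj : G.Adj u v := (SimpleGraph.mem_edgeSet G).mp he
    by_cases h1 : π.r u v
    · by_cases h2 : π'.r u v
      · exact absurd
          (show (connMeet G π π').r u v from
            SimpleGraph.Adj.reachable (show (meetGraph G π π').Adj u v from ⟨hadj, h1, h2⟩)) hnr
      · exact Or.inr ⟨he, u, v, rfl, h2⟩
    · exact Or.inl ⟨he, u, v, rfl, h1⟩

lemma ind_le {S T : Set (Sym2 V)} (h : S ⊆ T) :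
    (Finsupp.equivFunOnFinite.symm fun e => if e ∈ S then (1:ℕ) else 0) ≤
    Finsupp.equivFunOnFinite.symm fun e => if e ∈ T then 1 else 0 := by
  intro e
  simp only [Finsupp.coe_equivFunOnFinite_symm]
  by_cases hs : e ∈ S
  · simp [hs, h hs]
  · simp [hs]


/-- In the lcm-lattice, the join of `y^{F(π)}` and `y^{F(π')}` is their lcm
`y^{F(π) ∪ F(π')}`, and `F(π) ∪ F(π') = F(π ∨ π')`, where the join `π ∨ π'` in
the dual connected partition lattice is the common-connected-refinement. -/
theorem stmt_11 (k : Type*) [Field k] (G : SimpleGraph V) (hG : G.Connected)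
    (π π' : Setoid V) (hπ : ConnPart G π) (hπ' : ConnPart G π') :
    yMon k (crossF G π) ∣ yMon k (crossF G π ∪ crossF G π') ∧
    yMon k (crossF G π') ∣ yMon k (crossF G π ∪ crossF G π') ∧
    (∀ m : MvPolynomial (Sym2 V) k,
      yMon k (crossF G π) ∣ m → yMon k (crossF G π') ∣ m →
        yMon k (crossF G π ∪ crossF G π') ∣ m) ∧
    crossF G π ∪ crossF G π' = crossF G (connMeet G π π') := by
  have key := crossF_union_eq G π π'
  refine ⟨?_, ?_, ?_, key⟩
  · rw [yMon, yMon, monomial_one_dvd_iff]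
    intro d hd
    rw [MvPolynomial.support_monomial, if_neg one_ne_zero] at hd
    simp only [Finset.mem_singleton] at hd
    subst hd
    exact ind_le Set.subset_union_left
  · rw [yMon, yMon, monomial_one_dvd_iff]
    intro d hd
    rw [MvPolynomial.support_monomial, if_neg one_ne_zero] at hd
    simp only [Finset.mem_singleton] at hd
    subst hd
    exact ind_le Set.subset_union_right
  · intro m h1 h2
    rw [yMon, monomial_one_dvd_iff] at h1 h2 ⊢
    intro d hd
    have := h1 d hd
    have := h2 d hd
    intro e
    simp only [Finsupp.coe_equivFunOnFinite_symm]
    rcases Classical.em (e ∈ crossF G π) with hs | hs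
    · simpa [hs] using (h1 d hd) e
    rcases Classical.em (e ∈ crossF G π') with hs' | hs'
    · simpa [hs'] using (h2 d hd) e
    · simp [hs, hs']
end

section
/- Let C_1 = {U_1, W_1} and C_2 = {U_2, W_2} be cuts of a connected graph G with sink v_n ∈ W_1 ∩ W_2, and suppose there is an edge e with e_1 ∈ U_1 ∩ U_2. Let W_3 be the vertex set of the connected component of G[W_1 ∩ W_2] containing v_n, and set C_3 = {V \ W_3, W_3}. Then C_3 is a connected cut (both G[V\W_3] and G[W_3] are connected, assuming U_1 ∪ U_2 induces a connected subgraph), and the cut-set of C_3 is contained in the union of the cut-sets of C_1 and C_2. -/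
open SimpleGraph
open scoped Classical

variable {V : Type*} [Fintype V] [DecidableEq V]

/-- The cut-set of the cut `{U, Uᶜ}`: edges with one endpoint in `U` and one
outside `U`. -/
def cutsetS (G : SimpleGraph V) (U : Set V) : Set (Sym2 V) :=
  {e | e ∈ G.edgeSet ∧ ∃ u v, e = s(u, v) ∧ u ∈ U ∧ v ∉ U}

lemma reach_mono (G : SimpleGraph V) {A B : Set V} (hAB : A ⊆ B) {x y : V}
    (hx : x ∈ A) (hy : y ∈ A) (h : (G.induce A).Reachable ⟨x, hx⟩ ⟨y, hy⟩) :
    (G.induce B).Reachable ⟨x, hAB hx⟩ ⟨y, hAB hy⟩ :=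
  h.map ⟨Set.inclusion hAB, fun {a b} hab => by simpa using hab⟩

lemma aux1 (G : SimpleGraph V) {T : Set V} {t x : T}
    (p : (G.induce T).Walk x t) (W3 : Set V)
    (hW : W3 = {v | ∃ h : v ∈ T, (G.induce T).Reachable ⟨v, h⟩ t})
    (hx : ↑x ∈ W3) (ht : ↑t ∈ W3) :
    (G.induce W3).Reachable ⟨x, hx⟩ ⟨t, ht⟩ := by
  induction p with
  | nil => exact Reachable.refl _
  | @cons a b _ h q ih =>
    have hb : ↑b ∈ W3 := by rw [hW]; exact ⟨b.2, q.reachable⟩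
    exact (Adj.reachable (show (G.induce W3).Adj ⟨a, hx⟩ ⟨b, hb⟩ from h)).trans (ih hW hb ht)

lemma aux2 (G : SimpleGraph V) {T : Set V} {t : T} (W3 : Set V)
    (hW : W3 = {v | ∃ h : v ∈ T, (G.induce T).Reachable ⟨v, h⟩ t})
    {x y : V} (p : G.Walk x y) (hx : x ∈ T) (hxW : x ∉ W3) (hy : y ∉ T) :
    ∃ z, z ∉ T ∧ ∃ hz : z ∈ W3ᶜ, (G.induce W3ᶜ).Reachable ⟨x, hxW⟩ ⟨z, hz⟩ := by
  induction p with
  | nil => exact absurd hx hy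
  | @cons a b _ h q ih =>
    by_cases hb : b ∈ T
    · have hbW : b ∉ W3 := by
        intro hmem
        rw [hW] at hmem
        obtain ⟨_, hr⟩ := hmem
        exact hxW (by
          rw [hW]
          exact ⟨hx, (Adj.reachable
            (show (G.induce T).Adj ⟨a, hx⟩ ⟨b, hb⟩ from h)).trans hr⟩)
      obtain ⟨z, hzT, hz, hr⟩ := ih hb hbW hy
      exact ⟨z, hzT, hz, (Adj.reachable
        (show (G.induce W3ᶜ).Adj ⟨a, hxW⟩ ⟨b, hbW⟩ from h)).trans hr⟩
    · have hbW : b ∉ W3 := fun hmem => hb (by rw [hW] at hmem; exact hmem.1)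
      exact ⟨b, hb, hbW, Adj.reachable
        (show (G.induce W3ᶜ).Adj ⟨a, hxW⟩ ⟨b, hbW⟩ from h)⟩

/-- Given cuts `{U₁, W₁}`, `{U₂, W₂}` with sink `s ∈ W₁ ∩ W₂`, with `G[U₁]`,
`G[U₂]` connected and `U₁ ∩ U₂ ≠ ∅`, let `W₃` be the connected component of
`G[W₁ ∩ W₂]` containing `s` and `C₃ = {V \ W₃, W₃}`. Then `C₃` is a connected
cut and its cut-set is contained in the union of the cut-sets of the two cuts. -/
theorem stmt_15 (G : SimpleGraph V) (hG : G.Connected) (s : V) (U1 U2 : Set V)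
    (h1 : (G.induce U1).Connected) (h2 : (G.induce U2).Connected)
    (hs1 : s ∉ U1) (hs2 : s ∉ U2) (hI : (U1 ∩ U2).Nonempty) :
    ∀ W3 : Set V,
      W3 = {v | ∃ h : v ∈ U1ᶜ ∩ U2ᶜ,
        (G.induce (U1ᶜ ∩ U2ᶜ)).Reachable ⟨v, h⟩ ⟨s, ⟨hs1, hs2⟩⟩} →
      (G.induce W3).Connected ∧ (G.induce W3ᶜ).Connected ∧
        cutsetS G W3ᶜ ⊆ cutsetS G U1 ∪ cutsetS G U2 := by
  intro W3 hW
  set T : Set V := U1ᶜ ∩ U2ᶜ with hT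
  set t : T := ⟨s, ⟨hs1, hs2⟩⟩ with ht
  have hWT : W3 ⊆ T := by rw [hW]; rintro v ⟨h, -⟩; exact h
  have hsW : s ∈ W3 := by rw [hW]; exact ⟨⟨hs1, hs2⟩, Reachable.refl _⟩
  have hnotT : ∀ z : V, z ∉ T → z ∈ U1 ∪ U2 := by
    intro z hz
    by_contra hc
    rw [Set.mem_union] at hc
    push_neg at hc
    exact hz ⟨hc.1, hc.2⟩
  -- connectivity of W3
  have hc1 : (G.induce W3).Connected := by
    have key : ∀ (v : V) (hv : v ∈ W3), (G.induce W3).Reachable ⟨v, hv⟩ ⟨s, hsW⟩ := by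
      intro v hv
      have hv' := hv
      rw [hW] at hv'
      obtain ⟨hvT, hr⟩ := hv'
      obtain ⟨p⟩ := hr
      exact aux1 G p W3 hW hv hsW
    haveI : Nonempty (↑W3) := ⟨⟨s, hsW⟩⟩
    refine Connected.mk fun a b => ?_
    exact (key a.1 a.2).trans (key b.1 b.2).symm
  -- W3ᶜ
  have hUsub : U1 ∪ U2 ⊆ W3ᶜ := by
    intro u hu hmem
    rcases hu with hu | hu
    · exact (hWT hmem).1 hu
    · exact (hWT hmem).2 hu
  obtain ⟨u₀, hu₀⟩ := hI
  have hU12 : (G.induce (U1 ∪ U2)).Connected := induce_union_connected h1.preconnected h2.preconnected ⟨u₀, hu₀⟩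
  have reach_to : ∀ (x : V) (hx : x ∈ W3ᶜ), ∃ z, ∃ hzU : z ∈ U1 ∪ U2,
      (G.induce W3ᶜ).Reachable ⟨x, hx⟩ ⟨z, hUsub hzU⟩ := by
    intro x hx
    by_cases hxT : x ∈ T
    · obtain ⟨p⟩ := (hG x u₀).some.reachable
      obtain ⟨z, hzT, hz, hr⟩ := aux2 G (t := t) W3 hW ((hG x u₀).some) hxT hx
        (fun h => h.1 hu₀.1)
      exact ⟨z, hnotT z hzT, hr⟩
    · exact ⟨x, hnotT x hxT, Reachable.refl _⟩
  have hc2 : (G.induce W3ᶜ).Connected := by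
    haveI : Nonempty (↑(W3ᶜ)) := ⟨⟨u₀, hUsub (Or.inl hu₀.1)⟩⟩
    refine Connected.mk fun a b => ?_
    obtain ⟨za, hza, hra⟩ := reach_to a.1 a.2
    obtain ⟨zb, hzb, hrb⟩ := reach_to b.1 b.2
    have := reach_mono G hUsub hza hzb (hU12.preconnected ⟨za, hza⟩ ⟨zb, hzb⟩)
    exact (hra.trans this).trans hrb.symm
  refine ⟨hc1, hc2, ?_⟩
  rintro e ⟨he, u, v, rfl, hu, hv⟩
  rw [Set.notMem_compl_iff] at hv
  have hadj : G.Adj u v := he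
  have huT : u ∉ T := by
    intro huT
    have hv' := hv
    rw [hW] at hv'
    obtain ⟨hvT, hr⟩ := hv'
    exact hu (by rw [hW]; exact ⟨huT, (Adj.reachable
      (show (G.induce T).Adj ⟨u, huT⟩ ⟨v, hvT⟩ from hadj)).trans hr⟩)
  rcases hnotT u huT with h | h
  · exact Or.inl ⟨he, u, v, rfl, h, (hWT hv).1⟩
  · exact Or.inr ⟨he, u, v, rfl, h, (hWT hv).2⟩
end
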